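/- Monotone zero region: if q₁*(v₁) = 0 is optimal for Π(·, v₁) at some v₁ with ψ(v₁) < 0, then q₁ = 0 is also optimal for every v₁' < v₁. Consequently the set {v₁ : q₁*(v₁) > 0} is an upper interval [ṽ₁, 1]. -/

import Mathlib

open MeasureTheory Set

/-- Monotone zero region: if `q₁ = 0` is optimal for `Π(·, v₁)` at some `v₁`
with `ψ(v₁) < 0`, then `q₁ = 0` is also optimal for every lower type
`v₁' < v₁`. -/
theorem stmt9 (F : ℝ → ℝ → ℝ) (ψ : ℝ → ℝ) (Pr : ℝ → ℝ → ℝ)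
    (hψ : StrictMono ψ)
    (hPr : ∀ q v, Pr q v = ψ v + (1 - q) * ∫ v₂ in Iic (-ψ v), F v₂ q)
    (hF1 : ∀ q ∈ Ioo (0:ℝ) 1, ∀ v₂ : ℝ, F v₂ q < 1)
    (hF0 : ∀ q ∈ Icc (0:ℝ) 1, ∀ v₂ : ℝ, 0 ≤ F v₂ q)
    (hdeg : ∀ v : ℝ, ψ v < 0 → ∫ v₂ in Iic (-ψ v), F v₂ 0 = -ψ v)
    (hInt : ∀ q ∈ Icc (0:ℝ) 1, ∀ v : ℝ,
      IntegrableOn (fun v₂ => F v₂ q) (Iic (-ψ v)) volume)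
    (v₁ : ℝ) (hneg : ψ v₁ < 0)
    (hmax : IsMaxOn (fun q => Pr q v₁) (Icc 0 1) 0) :
    ∀ v₁' ∈ Icc (0:ℝ) 1, v₁' < v₁ → IsMaxOn (fun q => Pr q v₁') (Icc 0 1) 0 := by
  intro v₁' _ hlt
  have hψ' : ψ v₁' < ψ v₁ := hψ hlt
  have hneg' : ψ v₁' < 0 := hψ'.trans hneg
  have hPr0' : Pr 0 v₁' = 0 := by rw [hPr, hdeg v₁' hneg']; ring
  have hPr0₁ : Pr 0 v₁ = 0 := by rw [hPr, hdeg v₁ hneg]; ring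
  intro q hq
  simp only [mem_Icc] at hq
  obtain ⟨hq0, hq1⟩ := hq
  show Pr q v₁' ≤ Pr 0 v₁'
  rw [hPr0']
  rcases eq_or_lt_of_le hq0 with rfl | hq0'
  · rw [hPr, hdeg v₁' hneg']; ring_nf; exact le_refl 0
  rcases eq_or_lt_of_le hq1 with rfl | hq1'
  · rw [hPr]; simp; linarith
  set a := -ψ v₁ with ha
  set b := -ψ v₁' with hb
  have hab : a ≤ b := by simp [ha, hb]; linarith
  have hIntIic : IntegrableOn (fun v₂ => F v₂ q) (Iic a) volume :=
    hInt q ⟨hq0, hq1⟩ v₁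
  have hIntIoc : IntegrableOn (fun v₂ => F v₂ q) (Ioc a b) volume :=
    (hInt q ⟨hq0, hq1⟩ v₁').mono_set Ioc_subset_Iic_self
  have hsplit : ∫ v₂ in Iic b, F v₂ q
      = (∫ v₂ in Iic a, F v₂ q) + ∫ v₂ in Ioc a b, F v₂ q := by
    rw [← setIntegral_union (Iic_disjoint_Ioc le_rfl) measurableSet_Ioc hIntIic hIntIoc,
      Iic_union_Ioc_eq_Iic hab]
  have hI0 : 0 ≤ ∫ v₂ in Ioc a b, F v₂ q :=
    setIntegral_nonneg measurableSet_Ioc fun x _ => hF0 q ⟨hq0, hq1⟩ x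
  have hIle : ∫ v₂ in Ioc a b, F v₂ q ≤ b - a := by
    have h1 : ∫ v₂ in Ioc a b, F v₂ q ≤ ∫ _ in Ioc a b, (1 : ℝ) := by
      apply setIntegral_mono_on hIntIoc (integrableOn_const ?_)
        measurableSet_Ioc (fun x _ => (hF1 q ⟨hq0', hq1'⟩ x).le)
      rw [Real.volume_Ioc]; exact ENNReal.ofReal_ne_top
    have h2 : ∫ _ in Ioc a b, (1 : ℝ) = b - a := by
      simp [Real.volume_Ioc, ENNReal.toReal_ofReal (sub_nonneg.2 hab), hab]
    linarith
  have hmaxq : Pr q v₁ ≤ 0 := by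
    have := hmax (mem_Icc.2 ⟨hq0, hq1⟩)
    simpa [hPr0₁] using this
  rw [hPr] at hmaxq ⊢
  rw [← hb, hsplit]
  rw [← ha] at hmaxq
  have hba : b - a = ψ v₁ - ψ v₁' := by simp [ha, hb]; ring
  nlinarith [hI0, hIle, hq0', hq1', hmaxq]
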